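/- Let p be a prime and k a perfect field of characteristic p. Then the ring W₂(k) of Witt vectors of length two over k is flat as a module over ℤ/p²ℤ. -/

import Mathlib

open TensorProduct

/-- Injectivity of `I ⊗ M → M` for a principal ideal `I = (x)`, given that whenever
`x • m = 0` the tensor `x ⊗ m` already vanishes in `(x) ⊗ M`. -/
lemma aux_rTensor_injective {R M : Type} [CommRing R] [AddCommGroup M] [Module R M]
    (x : R)
    (h : ∀ m : M, x • m = 0 →
      ((⟨x, Ideal.mem_span_singleton_self x⟩ : Ideal.span {x}) ⊗ₜ[R] m :
        (Ideal.span {x} : Ideal R) ⊗[R] M) = 0) :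
    Function.Injective (LinearMap.rTensor M (Ideal.span {x} : Ideal R).subtype) := by
  set e : Ideal.span {x} := ⟨x, Ideal.mem_span_singleton_self x⟩ with he
  have key : ∀ t : (Ideal.span {x} : Ideal R) ⊗[R] M, ∃ m : M, t = e ⊗ₜ[R] m := by
    intro t
    induction t using TensorProduct.induction_on with
    | zero => exact ⟨0, (tmul_zero _ _).symm⟩
    | tmul y m =>
      obtain ⟨y, hy⟩ := y
      obtain ⟨r, rfl⟩ := Ideal.mem_span_singleton.1 hy
      refine ⟨r • m, ?_⟩
      have : (⟨x * r, hy⟩ : Ideal.span {x}) = r • e := by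
        apply Subtype.ext
        simp [he, mul_comm]
      rw [this, smul_tmul]
    | add a b ha hb =>
      obtain ⟨m₁, rfl⟩ := ha
      obtain ⟨m₂, rfl⟩ := hb
      exact ⟨m₁ + m₂, by rw [tmul_add]⟩
  rw [injective_iff_map_eq_zero]
  intro t ht
  obtain ⟨m, rfl⟩ := key t
  have hxm : x • m = 0 := by
    have := congrArg (TensorProduct.lid R M) ht
    simpa [he] using this
  exact h m hxm

theorem flat_truncatedWittVector_two_over_zmod_pow_two
    (p : ℕ) [Fact p.Prime] (k : Type) [Field k] [CharP k p] [PerfectRing k p]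
    [Algebra (ZMod (p ^ 2)) (TruncatedWittVector p 2 k)] :
    Module.Flat (ZMod (p ^ 2)) (TruncatedWittVector p 2 k) := by
  have hp : p.Prime := Fact.out
  haveI : NeZero (p ^ 2) := ⟨pow_ne_zero 2 hp.ne_zero⟩
  set M := TruncatedWittVector p 2 k with hM
  -- Key divisibility property: `p`-torsion elements of `W₂(k)` are divisible by `p`.
  have key : ∀ m : M, (p : M) * m = 0 → ∃ n : M, m = (p : M) * n := by
    intro m hm
    obtain ⟨x, rfl⟩ := WittVector.truncate_surjective p 2 k m
    have hcast : (p : M) * WittVector.truncate 2 x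
        = WittVector.truncate 2 (x * (p : WittVector p k)) := by
      rw [map_mul, map_natCast, mul_comm]
    rw [hcast] at hm
    have hc1 : (x * (p : WittVector p k)).coeff 1 = 0 := by
      have h := congrArg (fun z : M => TruncatedWittVector.coeff (1 : Fin 2) z) hm
      simp only [WittVector.coeff_truncate, TruncatedWittVector.coeff_zero] at h
      exact h
    have hx0 : x.coeff 0 = 0 := by
      have h01 := WittVector.mul_charP_coeff_succ (p := p) x 0
      norm_num at h01
      rw [h01] at hc1
      exact pow_eq_zero_iff hp.ne_zero |>.1 hc1
    obtain ⟨c, hc⟩ := surjective_frobenius k p (x.coeff 1)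
    refine ⟨WittVector.truncate 2 (WittVector.teichmuller p c), ?_⟩
    rw [show (p : M) * WittVector.truncate 2 (WittVector.teichmuller p c)
        = WittVector.truncate 2 ((WittVector.teichmuller p c) * (p : WittVector p k)) by
      rw [map_mul, map_natCast, mul_comm]]
    ext i
    fin_cases i
    · simp only [WittVector.coeff_truncate]
      show x.coeff 0 = _
      rw [hx0, WittVector.mul_charP_coeff_zero]
    · simp only [WittVector.coeff_truncate]
      show x.coeff 1 = ((WittVector.teichmuller p c) * (p : WittVector p k)).coeff 1
      have h01 := WittVector.mul_charP_coeff_succ (p := p) (WittVector.teichmuller p c) 0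
      norm_num at h01
      rw [h01, ← hc, frobenius_def]
  haveI : IsPrincipalIdealRing (ZMod (p ^ 2)) :=
    IsPrincipalIdealRing.of_surjective (F := ℤ →+* ZMod (p ^ 2))
      (Int.castRingHom (ZMod (p ^ 2))) ZMod.intCast_surjective
  rw [Module.Flat.iff_rTensor_injective']
  intro I
  obtain ⟨a, rfl⟩ := Submodule.IsPrincipal.principal I
  change Function.Injective (LinearMap.rTensor _ (Ideal.span {a}).subtype)
  -- classify the generator
  have trichotomy : Ideal.span {a} = Ideal.span ({0} : Set (ZMod (p ^ 2)))
      ∨ Ideal.span {a} = Ideal.span ({1} : Set (ZMod (p ^ 2)))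
      ∨ Ideal.span {a} = Ideal.span ({(p : ZMod (p ^ 2))} : Set (ZMod (p ^ 2))) := by
    by_cases ha0 : a = 0
    · exact Or.inl (by rw [ha0])
    by_cases hau : IsUnit a
    · refine Or.inr (Or.inl ?_)
      rw [Ideal.span_singleton_one, Ideal.span_singleton_eq_top.2 hau]
    refine Or.inr (Or.inr ?_)
    have hval : ((a.val : ℕ) : ZMod (p ^ 2)) = a := ZMod.natCast_rightInverse a
    have hdvd : p ∣ a.val := by
      by_contra hnd
      exact hau (hval ▸ (ZMod.isUnit_iff_coprime a.val (p ^ 2)).2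
        ((hp.coprime_iff_not_dvd.2 hnd).symm.pow_right 2))
    obtain ⟨c, hc⟩ := hdvd
    have hcp : ¬ p ∣ c := by
      rintro ⟨d, hd⟩
      apply ha0
      rw [← hval, hc, hd, show p * (p * d) = p ^ 2 * d by ring]
      push_cast
      have h2 : ((p : ZMod (p ^ 2))) ^ 2 = 0 := by
        have := ZMod.natCast_self (p ^ 2); push_cast at this; exact this
      rw [h2, zero_mul]
    have hcu : IsUnit ((c : ℕ) : ZMod (p ^ 2)) :=
      (ZMod.isUnit_iff_coprime c (p ^ 2)).2 ((hp.coprime_iff_not_dvd.2 hcp).symm.pow_right 2)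
    rw [← hval, hc]
    push_cast
    exact Ideal.span_singleton_mul_right_unit hcu _
  rcases trichotomy with h | h | h <;> rw [h]
  · -- ideal (0)
    apply aux_rTensor_injective
    intro m _
    have : (⟨(0 : ZMod (p ^ 2)), Ideal.mem_span_singleton_self 0⟩ :
        Ideal.span ({0} : Set (ZMod (p ^ 2)))) = 0 := rfl
    rw [this, zero_tmul]
  · -- ideal (1)
    apply aux_rTensor_injective
    intro m hm
    rw [one_smul] at hm
    rw [hm, tmul_zero]
  · -- ideal (p)
    apply aux_rTensor_injective
    intro m hm
    have hpm : (p : M) * m = 0 := by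
      calc (p : M) * m = ((p : ZMod (p ^ 2))) • m := by
            rw [Algebra.smul_def, map_natCast]
        _ = 0 := hm
    obtain ⟨n, hn⟩ := key m hpm
    have hn' : m = (p : ZMod (p ^ 2)) • n := by
      rw [Algebra.smul_def, map_natCast]; exact hn
    rw [hn', ← smul_tmul]
    have : ((p : ZMod (p ^ 2)) • (⟨(p : ZMod (p ^ 2)),
        Ideal.mem_span_singleton_self _⟩ : Ideal.span {(p : ZMod (p ^ 2))})) = 0 := by
      apply Subtype.ext
      show (p : ZMod (p ^ 2)) * (p : ZMod (p ^ 2)) = 0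
      have h2 := ZMod.natCast_self (p ^ 2)
      push_cast at h2
      rw [← h2]; ring
    rw [this, zero_tmul]
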